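/- Let ζ₀ ∈ (0, √(2−√2)) be the unique zero of g₀(ζ) := ∫_ζ^1 √(t^{−2} − 1) dt − (1−ζ²)^{3/2}/(2−ζ²) in that interval, and define B := 2·(ζ₀²/√(1−ζ₀²))·∫_{ζ₀}^1 √(t^{−2} − 1) dt. Then 0.2692 < B < 0.2693. -/

import Mathlib

open Real intervalIntegral

/-- The leading-order criticality function
`g₀(ζ) = ∫_ζ^1 √(t^{−2}−1) dt − (1−ζ²)^{3/2}/(2−ζ²)`. -/
noncomputable def g0 (ζ : ℝ) : ℝ :=
  (∫ t in ζ..(1 : ℝ), Real.sqrt (1 / t ^ 2 - 1)) - (1 - ζ ^ 2) ^ ((3 : ℝ) / 2) / (2 - ζ ^ 2)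

noncomputable def H (t : ℝ) : ℝ :=
  Real.sqrt (1 - t ^ 2) - Real.log (1 + Real.sqrt (1 - t ^ 2)) + Real.log t

noncomputable def Phi (ζ : ℝ) : ℝ :=
  Real.log (1 + Real.sqrt (1 - ζ ^ 2)) - Real.log ζ - Real.sqrt (1 - ζ ^ 2)
    - (1 - ζ ^ 2) * Real.sqrt (1 - ζ ^ 2) / (2 - ζ ^ 2)


lemma H_hasDerivAt {x : ℝ} (hx0 : 0 < x) (hx1 : x < 1) :
    HasDerivAt H (Real.sqrt (1 / x ^ 2 - 1)) x := by
  have hA : (0:ℝ) < 1 - x ^ 2 := by nlinarith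
  set s := Real.sqrt (1 - x ^ 2) with hsdef
  have hs : 0 < s := Real.sqrt_pos.mpr hA
  have hs2 : s ^ 2 = 1 - x ^ 2 := Real.sq_sqrt hA.le
  have h1 : HasDerivAt (fun t : ℝ => 1 - t ^ 2) (-(2 * x)) x := by
    simpa using (hasDerivAt_pow 2 x).const_sub 1
  have h2 : HasDerivAt (fun t : ℝ => Real.sqrt (1 - t ^ 2)) (-(2 * x) / (2 * s)) x :=
    h1.sqrt hA.ne'
  have h3 : HasDerivAt (fun t : ℝ => Real.log (1 + Real.sqrt (1 - t ^ 2)))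
      ((-(2 * x) / (2 * s)) / (1 + s)) x := by
    have := (h2.const_add 1).log (by positivity)
    simpa using this
  have h4 : HasDerivAt Real.log x⁻¹ x := Real.hasDerivAt_log hx0.ne'
  have h5 : HasDerivAt H (-(2 * x) / (2 * s) - (-(2 * x) / (2 * s)) / (1 + s) + x⁻¹) x :=
    (h2.sub h3).add h4
  have key : -(2 * x) / (2 * s) - (-(2 * x) / (2 * s)) / (1 + s) + x⁻¹ = s / x := by
    have h1s : (1 : ℝ) + s ≠ 0 := by positivity
    field_simp
    linear_combination (-s) * hs2
  have hval : Real.sqrt (1 / x ^ 2 - 1) = s / x := by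
    rw [show 1 / x ^ 2 - 1 = (1 - x ^ 2) / x ^ 2 by field_simp]
    rw [Real.sqrt_div hA.le, Real.sqrt_sq hx0.le]
  rw [hval, ← key]
  exact h5

lemma integral_closed_form {ζ : ℝ} (h0 : 0 < ζ) (h1 : ζ < 1) :
    (∫ t in ζ..(1 : ℝ), Real.sqrt (1 / t ^ 2 - 1))
      = Real.log (1 + Real.sqrt (1 - ζ ^ 2)) - Real.log ζ - Real.sqrt (1 - ζ ^ 2) := by
  have hcont : ContinuousOn H (Set.Icc ζ 1) := by
    have hsq : Continuous fun t : ℝ => Real.sqrt (1 - t ^ 2) := by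
      fun_prop
    apply ContinuousOn.add
    · apply ContinuousOn.sub hsq.continuousOn
      apply ContinuousOn.log (by fun_prop)
      intro t ht
      positivity
    · apply ContinuousOn.log continuousOn_id
      intro t ht
      exact (lt_of_lt_of_le h0 ht.1).ne'
  have hint : IntervalIntegrable (fun t => Real.sqrt (1 / t ^ 2 - 1)) MeasureTheory.volume ζ 1 := by
    apply ContinuousOn.intervalIntegrable
    apply ContinuousOn.sqrt
    apply ContinuousOn.sub _ continuousOn_const
    apply ContinuousOn.div continuousOn_const (by fun_prop)
    intro t ht
    rw [Set.uIcc_of_le h1.le] at ht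
    have : 0 < t := lt_of_lt_of_le h0 ht.1
    positivity
  have := integral_eq_sub_of_hasDerivAt_of_le h1.le hcont
    (fun x hx => H_hasDerivAt (lt_trans h0 hx.1) hx.2) hint
  rw [this]
  simp [H, Real.sqrt_eq_zero']
  ring


lemma Phi_hasDerivAt {x : ℝ} (hx0 : 0 < x) (hx1 : x < 1) :
    HasDerivAt Phi
      (x * Real.sqrt (1 - x ^ 2) * (4 - x ^ 2) / (2 - x ^ 2) ^ 2
        - Real.sqrt (1 - x ^ 2) / x) x := by
  have hA : (0:ℝ) < 1 - x ^ 2 := by nlinarith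
  have hB : (0:ℝ) < 2 - x ^ 2 := by nlinarith
  set s := Real.sqrt (1 - x ^ 2) with hsdef
  have hs : 0 < s := Real.sqrt_pos.mpr hA
  have hs2 : s ^ 2 = 1 - x ^ 2 := Real.sq_sqrt hA.le
  have h1 : HasDerivAt (fun t : ℝ => 1 - t ^ 2) (-(2 * x)) x := by
    simpa using (hasDerivAt_pow 2 x).const_sub 1
  have h2 : HasDerivAt (fun t : ℝ => Real.sqrt (1 - t ^ 2)) (-(2 * x) / (2 * s)) x :=
    h1.sqrt hA.ne'
  have h3 : HasDerivAt (fun t : ℝ => Real.log (1 + Real.sqrt (1 - t ^ 2)))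
      ((-(2 * x) / (2 * s)) / (1 + s)) x := by
    simpa using (h2.const_add 1).log (by positivity)
  have h4 : HasDerivAt Real.log x⁻¹ x := Real.hasDerivAt_log hx0.ne'
  have hnum : HasDerivAt (fun t : ℝ => (1 - t ^ 2) * Real.sqrt (1 - t ^ 2))
      ((-(2 * x)) * s + (1 - x ^ 2) * (-(2 * x) / (2 * s))) x := h1.mul h2
  have hden : HasDerivAt (fun t : ℝ => 2 - t ^ 2) (-(2 * x)) x := by
    simpa using (hasDerivAt_pow 2 x).const_sub 2
  have h5 : HasDerivAt (fun t : ℝ => (1 - t ^ 2) * Real.sqrt (1 - t ^ 2) / (2 - t ^ 2))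
      ((((-(2 * x)) * s + (1 - x ^ 2) * (-(2 * x) / (2 * s))) * (2 - x ^ 2)
        - (1 - x ^ 2) * s * (-(2 * x))) / (2 - x ^ 2) ^ 2) x := hnum.div hden hB.ne'
  have h6 : HasDerivAt Phi
      ((-(2 * x) / (2 * s)) / (1 + s) - x⁻¹ - (-(2 * x) / (2 * s))
        - ((((-(2 * x)) * s + (1 - x ^ 2) * (-(2 * x) / (2 * s))) * (2 - x ^ 2)
          - (1 - x ^ 2) * s * (-(2 * x))) / (2 - x ^ 2) ^ 2)) x :=
    ((h3.sub h4).sub h2).sub h5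
  convert h6 using 1
  have h1s : (1 : ℝ) + s ≠ 0 := by positivity
  field_simp
  linear_combination (6*x^2*s - 2*x^4*s - 4*s + 2*x^2 - x^4) * hs2

lemma Phi_deriv_neg {x : ℝ} (hx0 : 0 < x) (hxc : x < Real.sqrt (2 - Real.sqrt 2)) :
    x * Real.sqrt (1 - x ^ 2) * (4 - x ^ 2) / (2 - x ^ 2) ^ 2
      - Real.sqrt (1 - x ^ 2) / x < 0 := by
  have hsqrt2 : Real.sqrt 2 < 1.5 := by
    rw [show (1.5:ℝ) = Real.sqrt (1.5^2) by rw [Real.sqrt_sq]; norm_num]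
    exact Real.sqrt_lt_sqrt (by norm_num) (by norm_num)
  have hsqrt2' : (1:ℝ) < Real.sqrt 2 := by
    rw [show (1:ℝ) = Real.sqrt 1 by simp]
    exact Real.sqrt_lt_sqrt (by norm_num) (by norm_num)
  have hx2 : x ^ 2 < 2 - Real.sqrt 2 := by
    have h := pow_lt_pow_left₀ hxc hx0.le (n := 2) (by norm_num)
    rwa [Real.sq_sqrt (by nlinarith : (0:ℝ) ≤ 2 - Real.sqrt 2)] at h
  have hx1 : x < 1 := by nlinarith
  have hA : (0:ℝ) < 1 - x ^ 2 := by nlinarith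
  have hB : (0:ℝ) < 2 - x ^ 2 := by nlinarith
  set s := Real.sqrt (1 - x ^ 2) with hsdef
  have hs : 0 < s := Real.sqrt_pos.mpr hA
  rw [sub_neg, div_lt_div_iff₀ (by positivity) hx0]
  have hpoly : x ^ 2 * (4 - x ^ 2) < (2 - x ^ 2) ^ 2 := by
    have h2 : Real.sqrt 2 ^ 2 = 2 := Real.sq_sqrt (by norm_num)
    nlinarith [sq_nonneg (2 - Real.sqrt 2 - x ^ 2)]
  calc x * s * (4 - x ^ 2) * x = s * (x ^ 2 * (4 - x ^ 2)) := by ring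
  _ < s * (2 - x ^ 2) ^ 2 := by exact (mul_lt_mul_iff_right₀ hs).mpr hpoly


lemma exp_taylor_ub {d : ℝ} (h0 : 0 ≤ d) (h1 : d ≤ 1) :
    Real.exp d ≤ (∑ m ∈ Finset.range 10, d ^ m / m.factorial)
      + d ^ 10 * 11 / 3628800 / 10 := by
  have := Real.exp_bound' h0 h1 (n := 10) (by norm_num)
  calc Real.exp d ≤ (∑ m ∈ Finset.range 10, d ^ m / m.factorial)
      + d ^ 10 * (10 + 1) / ((10:ℕ).factorial * 10) := this
  _ = (∑ m ∈ Finset.range 10, d ^ m / m.factorial) + d ^ 10 * 11 / 3628800 / 10 := by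
      norm_num [Nat.factorial]
      ring

lemma exp_taylor_lb {d : ℝ} (h0 : 0 ≤ d) (h1 : d ≤ 1) :
    (∑ m ∈ Finset.range 10, d ^ m / m.factorial)
      - d ^ 10 * 11 / 3628800 / 10 ≤ Real.exp d := by
  have h := Real.exp_bound (x := d) (by rw [abs_of_nonneg h0]; exact h1) (n := 10) (by norm_num)
  rw [abs_of_nonneg h0] at h
  norm_num [Nat.factorial] at h
  have := (abs_le.mp h).1
  nlinarith [this]

lemma Phi_a_pos : 0 < Phi 0.58132 := by
  have hA : (1:ℝ) - 0.58132 ^ 2 = 0.6620670576 := by norm_num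
  set s := Real.sqrt (1 - 0.58132 ^ 2) with hsdef
  have hp : (0.813675031938 : ℝ) < s := by
    rw [hsdef]
    apply (Real.lt_sqrt (by norm_num)).mpr
    norm_num
  have hq : s < 0.813675031939 := by
    rw [hsdef]
    apply (Real.sqrt_lt' (by norm_num)).mpr
    norm_num
  -- exp bound: exp 0.568898 ≤ U
  have hU : Real.exp 0.568898 ≤ 1.766320 := by
    have h := exp_taylor_ub (d := 0.568898) (by norm_num) (by norm_num)
    have hsum : (∑ m ∈ Finset.range 10, (0.568898:ℝ) ^ m / m.factorial)
        + (0.568898:ℝ) ^ 10 * 11 / 3628800 / 10 ≤ 1.766320 := by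
      simp only [Finset.sum_range_succ, Finset.sum_range_zero, Nat.factorial]
      norm_num
    linarith
  have hexp : Real.exp 1.137796 < (1 + 0.813675031938) / 0.58132 := by
    rw [show (1.137796:ℝ) = 0.568898 + 0.568898 by norm_num, Real.exp_add]
    nlinarith [Real.exp_pos (0.568898:ℝ), hU]
  have hlog : (1.137796:ℝ) < Real.log ((1 + 0.813675031938) / 0.58132) :=
    (Real.lt_log_iff_exp_lt (by norm_num)).mpr hexp
  rw [Real.log_div (by norm_num) (by norm_num)] at hlog
  have hlogmono : Real.log (1 + 0.813675031938) ≤ Real.log (1 + s) :=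
    Real.log_le_log (by norm_num) (by linarith)
  have hs0 : 0 < s := by linarith
  show 0 < Real.log (1 + s) - Real.log 0.58132 - s
    - (1 - 0.58132 ^ 2) * s / (2 - 0.58132 ^ 2)
  have hdiv : (1 - 0.58132 ^ 2) * s / (2 - 0.58132 ^ 2) = (0.6620670576/1.6620670576) * s := by
    ring_nf
  rw [hdiv]
  linarith [hq, hlog, hlogmono]

lemma Phi_b_neg : Phi 0.58136 < 0 := by
  set s := Real.sqrt (1 - 0.58136 ^ 2) with hsdef
  have hp : (0.813646452951 : ℝ) < s := by
    rw [hsdef]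
    apply (Real.lt_sqrt (by norm_num)).mpr
    norm_num
  have hq : s < 0.813646452952 := by
    rw [hsdef]
    apply (Real.sqrt_lt' (by norm_num)).mpr
    norm_num
  have hL : (1.766261:ℝ) ≤ Real.exp 0.568865 := by
    have h := exp_taylor_lb (d := 0.568865) (by norm_num) (by norm_num)
    have hsum : (1.766261:ℝ) ≤ (∑ m ∈ Finset.range 10, (0.568865:ℝ) ^ m / m.factorial)
        - (0.568865:ℝ) ^ 10 * 11 / 3628800 / 10 := by
      simp only [Finset.sum_range_succ, Finset.sum_range_zero, Nat.factorial]
      norm_num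
    linarith
  have hexp : (1 + 0.813646452952) / 0.58136 < Real.exp 1.13773 := by
    rw [show (1.13773:ℝ) = 0.568865 + 0.568865 by norm_num, Real.exp_add]
    nlinarith [Real.exp_pos (0.568865:ℝ), hL]
  have hlog : Real.log ((1 + 0.813646452952) / 0.58136) < 1.13773 :=
    (Real.log_lt_iff_lt_exp (by norm_num)).mpr hexp
  rw [Real.log_div (by norm_num) (by norm_num)] at hlog
  have hlogmono : Real.log (1 + s) ≤ Real.log (1 + 0.813646452952) :=
    Real.log_le_log (by positivity) (by linarith)
  show Real.log (1 + s) - Real.log 0.58136 - s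
    - (1 - 0.58136 ^ 2) * s / (2 - 0.58136 ^ 2) < 0
  have hdiv : (1 - 0.58136 ^ 2) * s / (2 - 0.58136 ^ 2) = (0.6620205504/1.6620205504) * s := by
    ring_nf
  rw [hdiv]
  linarith [hp, hlog, hlogmono]


/-- `√(2−√2) < 1`. -/
lemma sqrt_c_lt_one : Real.sqrt (2 - Real.sqrt 2) < 1 := by
  have h1 : (1:ℝ) < Real.sqrt 2 := by
    rw [show (1:ℝ) = Real.sqrt 1 by simp]
    exact Real.sqrt_lt_sqrt (by norm_num) (by norm_num)
  have h2 : Real.sqrt 2 < 1.5 := by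
    rw [show (1.5:ℝ) = Real.sqrt (1.5^2) by rw [Real.sqrt_sq]; norm_num]
    exact Real.sqrt_lt_sqrt (by norm_num) (by norm_num)
  have : (2:ℝ) - Real.sqrt 2 < 1 := by linarith
  calc Real.sqrt (2 - Real.sqrt 2) < Real.sqrt 1 := Real.sqrt_lt_sqrt (by linarith) this
  _ = 1 := by simp

lemma Phi_anti : StrictAntiOn Phi (Set.Ioo 0 (Real.sqrt (2 - Real.sqrt 2))) := by
  apply strictAntiOn_of_deriv_neg (convex_Ioo _ _)
  · intro x hx
    exact (Phi_hasDerivAt hx.1 (hx.2.trans sqrt_c_lt_one)).continuousAt.continuousWithinAt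
  · intro x hx
    rw [isOpen_Ioo.interior_eq] at hx
    rw [(Phi_hasDerivAt hx.1 (hx.2.trans sqrt_c_lt_one)).deriv]
    exact Phi_deriv_neg hx.1 hx.2

lemma g0_eq_Phi {ζ : ℝ} (h0 : 0 < ζ) (h1 : ζ < 1) : g0 ζ = Phi ζ := by
  have hA : (0:ℝ) < 1 - ζ ^ 2 := by nlinarith
  have hrpow : (1 - ζ ^ 2) ^ ((3:ℝ)/2) = (1 - ζ ^ 2) * Real.sqrt (1 - ζ ^ 2) := by
    rw [show (3:ℝ)/2 = 1 + 1/2 by norm_num, Real.rpow_add hA, Real.rpow_one,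
      ← Real.sqrt_eq_rpow]
  rw [g0, Phi, integral_closed_form h0 h1, hrpow]

/-- With `ζ₀` the unique zero of `g₀` in `(0, √(2−√2))` and
`B = 2 (ζ₀²/√(1−ζ₀²)) ∫_{ζ₀}^1 √(t^{−2}−1) dt`, one has `0.2692 < B < 0.2693`. -/
theorem stmt13 :
    ∀ ζ₀ ∈ Set.Ioo (0 : ℝ) (Real.sqrt (2 - Real.sqrt 2)), g0 ζ₀ = 0 →
      0.2692 < 2 * (ζ₀ ^ 2 / Real.sqrt (1 - ζ₀ ^ 2))
          * ∫ t in ζ₀..(1 : ℝ), Real.sqrt (1 / t ^ 2 - 1)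
        ∧ 2 * (ζ₀ ^ 2 / Real.sqrt (1 - ζ₀ ^ 2))
          * (∫ t in ζ₀..(1 : ℝ), Real.sqrt (1 / t ^ 2 - 1)) < 0.2693 := by
  intro ζ hζ hg0
  have hζ1 : ζ < 1 := hζ.2.trans sqrt_c_lt_one
  have hA : (0:ℝ) < 1 - ζ ^ 2 := by nlinarith [hζ.1]
  have hB : (0:ℝ) < 2 - ζ ^ 2 := by nlinarith
  have hs : 0 < Real.sqrt (1 - ζ ^ 2) := Real.sqrt_pos.mpr hA
  have hs2 : Real.sqrt (1 - ζ ^ 2) ^ 2 = 1 - ζ ^ 2 := Real.sq_sqrt hA.le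
  have hPhi : Phi ζ = 0 := by rw [← g0_eq_Phi hζ.1 hζ1]; exact hg0
  have hsq2 : Real.sqrt 2 < 1.415 := by
    rw [show (1.415:ℝ) = Real.sqrt (1.415^2) by rw [Real.sqrt_sq]; norm_num]
    exact Real.sqrt_lt_sqrt (by norm_num) (by norm_num)
  have ha : (0.58132:ℝ) ∈ Set.Ioo 0 (Real.sqrt (2 - Real.sqrt 2)) := by
    constructor
    · norm_num
    · apply (Real.lt_sqrt (by norm_num)).mpr
      nlinarith
  have hb : (0.58136:ℝ) ∈ Set.Ioo 0 (Real.sqrt (2 - Real.sqrt 2)) := by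
    constructor
    · norm_num
    · apply (Real.lt_sqrt (by norm_num)).mpr
      nlinarith
  have h1 : (0.58132:ℝ) < ζ := by
    rcases lt_trichotomy ζ 0.58132 with h | h | h
    · have := Phi_anti hζ ha h
      linarith [Phi_a_pos]
    · rw [h] at hPhi; linarith [Phi_a_pos]
    · exact h
  have h2 : ζ < 0.58136 := by
    rcases lt_trichotomy ζ 0.58136 with h | h | h
    · exact h
    · rw [h] at hPhi; linarith [Phi_b_neg]
    · have := Phi_anti hb hζ h
      linarith [Phi_b_neg]
  have hIval : (∫ t in ζ..(1 : ℝ), Real.sqrt (1 / t ^ 2 - 1))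
      = (1 - ζ ^ 2) * Real.sqrt (1 - ζ ^ 2) / (2 - ζ ^ 2) := by
    rw [integral_closed_form hζ.1 hζ1]
    unfold Phi at hPhi
    linarith
  have hval : 2 * (ζ ^ 2 / Real.sqrt (1 - ζ ^ 2))
      * (∫ t in ζ..(1 : ℝ), Real.sqrt (1 / t ^ 2 - 1))
      = 2 * ζ ^ 2 * (1 - ζ ^ 2) / (2 - ζ ^ 2) := by
    rw [hIval]
    field_simp
  constructor
  · rw [hval, lt_div_iff₀ hB]
    nlinarith [mul_pos (sub_pos.mpr h1) (sub_pos.mpr h2), sq_nonneg (ζ - 0.58132),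
      sq_nonneg (ζ - 0.58136)]
  · rw [hval, div_lt_iff₀ hB]
    nlinarith [mul_pos (sub_pos.mpr h1) (sub_pos.mpr h2), sq_nonneg (ζ - 0.58132),
      sq_nonneg (ζ - 0.58136)]
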